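/- (Joint convexity) For probability distributions p1, q1, p2, q2 on a finite set with all entries positive, λ ∈ [0,1], and parameters 0 < k ≤ 1/2, r real, the generalized Tsallis relative entropy satisfies D_{k,r}((1-λ)p1 + λp2 || (1-λ)q1 + λq2) ≤ (1-λ) D_{k,r}(p1||q1) + λ D_{k,r}(p2||q2). -/

import Mathlib

open Real

/-- Two-parameter deformed logarithm: `ln_{k,r}(x) = (x^(2k) - 1) / (2k x^(r+k))`. -/
noncomputable def lnkr (k r x : ℝ) : ℝ := (x ^ (2 * k) - 1) / (2 * k * x ^ (r + k))

/-- Generalized Tsallis relative entropy `D_{k,r}(p‖q)`. -/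
noncomputable def Dkr {X : Type*} [Fintype X] (k r : ℝ) (p q : X → ℝ) : ℝ :=
  ∑ x, p x * (p x / q x) ^ (r - k) * lnkr k r (p x / q x)

/-- Each term of `Dkr` simplifies to `(a - a^(1-2k) b^(2k)) / (2k)`; the parameter
`r` cancels out. -/
lemma eval_term (k r a b : ℝ) (ha : 0 < a) (hb : 0 < b) (hk : k ≠ 0) :
    a * (a / b) ^ (r - k) * lnkr k r (a / b)
      = (a - a ^ (1 - 2 * k) * b ^ (2 * k)) / (2 * k) := by
  have ht : 0 < a / b := div_pos ha hb
  have h1 : (a / b) ^ (r - k) * (a / b) ^ (2 * k) = (a / b) ^ (r + k) := by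
    rw [← rpow_add ht]; ring_nf
  have haa : a ^ (1 - 2 * k) * a ^ (2 * k) = a := by
    rw [← rpow_add ha]; norm_num
  have h2 : a * (a / b) ^ (-(2 * k)) = a ^ (1 - 2 * k) * b ^ (2 * k) := by
    rw [rpow_neg ht.le, div_rpow ha.le hb.le]
    have h3 : (a:ℝ) ^ (2*k) ≠ 0 := (rpow_pos_of_pos ha _).ne'
    have h4 : (b:ℝ) ^ (2*k) ≠ 0 := (rpow_pos_of_pos hb _).ne'
    field_simp
    linear_combination -haa
  have h10 : (a / b) ^ (-(2 * k)) * (a / b) ^ (r + k) = (a / b) ^ (r - k) := by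
    rw [← rpow_add ht]; ring_nf
  unfold lnkr
  have h5 : (a / b) ^ (r + k) ≠ 0 := (rpow_pos_of_pos ht _).ne'
  have h6 : (2:ℝ) * k ≠ 0 := mul_ne_zero two_ne_zero hk
  field_simp
  rw [mul_comm k 2]
  linear_combination a * h1 - (a/b)^(r+k) * h2 + a * h10

/-- Superadditivity of the weighted geometric mean. -/
lemma geom_superadd (θ a₁ b₁ a₂ b₂ : ℝ) (hθ0 : 0 ≤ θ) (hθ1 : θ ≤ 1)
    (ha₁ : 0 < a₁) (hb₁ : 0 < b₁) (ha₂ : 0 < a₂) (hb₂ : 0 < b₂) :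
    a₁ ^ (1-θ) * b₁ ^ θ + a₂ ^ (1-θ) * b₂ ^ θ ≤ (a₁+a₂) ^ (1-θ) * (b₁+b₂) ^ θ := by
  have hA : 0 < a₁ + a₂ := by linarith
  have hB : 0 < b₁ + b₂ := by linarith
  have hApow : 0 < (a₁+a₂) ^ (1-θ) := rpow_pos_of_pos hA _
  have hBpow : 0 < (b₁+b₂) ^ θ := rpow_pos_of_pos hB _
  have key : ∀ a b : ℝ, 0 < a → 0 < b →
      a ^ (1-θ) * b ^ θ ≤ ((1-θ) * (a/(a₁+a₂)) + θ * (b/(b₁+b₂))) * ((a₁+a₂) ^ (1-θ) * (b₁+b₂) ^ θ) := by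
    intro a b ha hb
    have h := Real.geom_mean_le_arith_mean2_weighted (by linarith : (0:ℝ) ≤ 1-θ) hθ0
      (le_of_lt (div_pos ha hA)) (le_of_lt (div_pos hb hB)) (by ring)
    have h2 : (a/(a₁+a₂)) ^ (1-θ) * (b/(b₁+b₂)) ^ θ
        = a ^ (1-θ) * b ^ θ / ((a₁+a₂) ^ (1-θ) * (b₁+b₂) ^ θ) := by
      rw [div_rpow ha.le hA.le, div_rpow hb.le hB.le]; ring
    rw [h2, div_le_iff₀ (by positivity)] at h
    linarith [h]
  have k1 := key a₁ b₁ ha₁ hb₁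
  have k2 := key a₂ b₂ ha₂ hb₂
  have hsum : ((1-θ) * (a₁/(a₁+a₂)) + θ * (b₁/(b₁+b₂))) + ((1-θ) * (a₂/(a₁+a₂)) + θ * (b₂/(b₁+b₂))) = 1 := by
    field_simp; ring
  nlinarith [k1, k2, mul_pos hApow hBpow]

/-- Joint concavity of the weighted geometric mean. -/
lemma geom_concave (θ lam a₁ b₁ a₂ b₂ : ℝ) (hθ0 : 0 ≤ θ) (hθ1 : θ ≤ 1)
    (hl0 : 0 ≤ lam) (hl1 : lam ≤ 1)
    (ha₁ : 0 < a₁) (hb₁ : 0 < b₁) (ha₂ : 0 < a₂) (hb₂ : 0 < b₂) :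
    (1-lam) * (a₁ ^ (1-θ) * b₁ ^ θ) + lam * (a₂ ^ (1-θ) * b₂ ^ θ)
      ≤ ((1-lam)*a₁ + lam*a₂) ^ (1-θ) * ((1-lam)*b₁ + lam*b₂) ^ θ := by
  have scale : ∀ c a b : ℝ, 0 < c → 0 < a → 0 < b →
      (c*a) ^ (1-θ) * (c*b) ^ θ = c * (a ^ (1-θ) * b ^ θ) := by
    intro c a b hc ha hb
    rw [mul_rpow hc.le ha.le, mul_rpow hc.le hb.le]
    have : c ^ (1-θ) * c ^ θ = c := by rw [← rpow_add hc]; norm_num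
    linear_combination (a ^ (1-θ) * b ^ θ) * this
  rcases eq_or_lt_of_le hl0 with h0 | h0
  · simp [← h0]
  rcases eq_or_lt_of_le hl1 with h1 | h1
  · simp [h1]
  have hm : 0 < 1 - lam := by linarith
  calc (1-lam) * (a₁ ^ (1-θ) * b₁ ^ θ) + lam * (a₂ ^ (1-θ) * b₂ ^ θ)
      = ((1-lam)*a₁) ^ (1-θ) * ((1-lam)*b₁) ^ θ + (lam*a₂) ^ (1-θ) * (lam*b₂) ^ θ := by
        rw [scale _ _ _ hm ha₁ hb₁, scale _ _ _ h0 ha₂ hb₂]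
    _ ≤ ((1-lam)*a₁ + lam*a₂) ^ (1-θ) * ((1-lam)*b₁ + lam*b₂) ^ θ :=
        geom_superadd θ _ _ _ _ hθ0 hθ1 (by positivity) (by positivity) (by positivity) (by positivity)

theorem joint_convexity {X : Type*} [Fintype X] (p₁ q₁ p₂ q₂ : X → ℝ)
    (hp₁ : ∀ x, 0 < p₁ x) (hq₁ : ∀ x, 0 < q₁ x) (hp₂ : ∀ x, 0 < p₂ x) (hq₂ : ∀ x, 0 < q₂ x)
    (hp₁s : ∑ x, p₁ x = 1) (hq₁s : ∑ x, q₁ x = 1) (hp₂s : ∑ x, p₂ x = 1) (hq₂s : ∑ x, q₂ x = 1)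
    (lam : ℝ) (hlam0 : 0 ≤ lam) (hlam1 : lam ≤ 1)
    (k r : ℝ) (hk0 : 0 < k) (hk : k ≤ 1 / 2) :
    Dkr k r (fun x => (1 - lam) * p₁ x + lam * p₂ x) (fun x => (1 - lam) * q₁ x + lam * q₂ x) ≤
      (1 - lam) * Dkr k r p₁ q₁ + lam * Dkr k r p₂ q₂ := by
  have hkne : k ≠ 0 := hk0.ne'
  have hcomb : ∀ a b : ℝ, 0 < a → 0 < b → 0 < (1 - lam) * a + lam * b := by
    intro a b ha hb
    rcases eq_or_lt_of_le hlam1 with h1 | h1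
    · rw [h1]; simpa using hb
    · have : 0 < (1 - lam) * a := mul_pos (by linarith) ha
      nlinarith [mul_nonneg hlam0 hb.le]
  unfold Dkr
  rw [Finset.mul_sum, Finset.mul_sum, ← Finset.sum_add_distrib]
  apply Finset.sum_le_sum
  intro x _
  have hP := hcomb _ _ (hp₁ x) (hp₂ x)
  have hQ := hcomb _ _ (hq₁ x) (hq₂ x)
  rw [eval_term k r _ _ hP hQ hkne, eval_term k r _ _ (hp₁ x) (hq₁ x) hkne,
    eval_term k r _ _ (hp₂ x) (hq₂ x) hkne]
  have hgc := geom_concave (2*k) lam (p₁ x) (q₁ x) (p₂ x) (q₂ x)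
    (by linarith) (by linarith) hlam0 hlam1 (hp₁ x) (hq₁ x) (hp₂ x) (hq₂ x)
  have h2k : (0:ℝ) < 2*k := by linarith
  have hre : (1-lam) * ((p₁ x - p₁ x ^ (1-2*k) * q₁ x ^ (2*k)) / (2*k))
      + lam * ((p₂ x - p₂ x ^ (1-2*k) * q₂ x ^ (2*k)) / (2*k))
      = ((1-lam) * (p₁ x - p₁ x ^ (1-2*k) * q₁ x ^ (2*k))
        + lam * (p₂ x - p₂ x ^ (1-2*k) * q₂ x ^ (2*k))) / (2*k) := by ring
  rw [hre]
  gcongr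
  nlinarith [hgc]
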